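/- Global optimality criterion: let ι be a nonempty finite index set, q : ι → ℝ², f : ι → ℝ, F(x) = max_{i ∈ ι} (dist(x, q_i) + f_i), and c ∈ ℝ². If for every u ∈ ℝ² with u ≠ 0 there exists an index i with dist(c, q_i) + f_i = F(c) and ⟨c − q_i, u⟩ ≥ 0, then F(c) ≤ F(x) for all x ∈ ℝ². (This is the Euclidean form of the criterion 'if the directions to the farthest neighbors do not lie in an open halfplane through c, then c is the geodesic center'.) -/
import Mathlib


open scoped RealInnerProductSpace

/-- Global optimality criterion: if for every nonzero direction `u` some farthest
index `i` at `c` satisfies `⟪c - q i, u⟫ ≥ 0`, then `c` is a global minimizer of `F`. -/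
theorem global_optimality_criterion {ι : Type*} [Fintype ι] [Nonempty ι]
    (q : ι → EuclideanSpace ℝ (Fin 2)) (f : ι → ℝ)
    (F : EuclideanSpace ℝ (Fin 2) → ℝ)
    (hF : ∀ x, F x = Finset.univ.sup' Finset.univ_nonempty fun i => dist x (q i) + f i)
    (c : EuclideanSpace ℝ (Fin 2))
    (h : ∀ u : EuclideanSpace ℝ (Fin 2), u ≠ 0 →
      ∃ i, dist c (q i) + f i = F c ∧ 0 ≤ ⟪c - q i, u⟫) :
    ∀ x, F c ≤ F x := by
  intro x
  by_cases hx : x = c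
  · simp [hx]
  obtain ⟨i, hi1, hi2⟩ := h (x - c) (sub_ne_zero.mpr hx)
  have key : dist c (q i) ≤ dist x (q i) := by
    rw [dist_eq_norm, dist_eq_norm]
    have hsq : ‖x - q i‖ ^ 2 = ‖x - c‖ ^ 2 + 2 * ⟪x - c, c - q i⟫ + ‖c - q i‖ ^ 2 := by
      have hdecomp : x - q i = (x - c) + (c - q i) := by abel
      rw [hdecomp, norm_add_sq_real]
    have hcomm : ⟪x - c, c - q i⟫ = ⟪c - q i, x - c⟫ := real_inner_comm _ _
    nlinarith [norm_nonneg (x - c), norm_nonneg (c - q i), norm_nonneg (x - q i)]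
  calc F c = dist c (q i) + f i := hi1.symm
    _ ≤ dist x (q i) + f i := by linarith
    _ ≤ F x := by rw [hF]; exact Finset.le_sup' (fun i => dist x (q i) + f i) (Finset.mem_univ i)
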